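/- Multi-linear model theorem for preferential logic P: if a finite set Γ of formulas is satisfiable in a preferential model, then Γ is satisfiable in a multi-linear preferential model, i.e. a finite model whose set of worlds partitions into components W₁, ..., Wₙ such that < is a total (strict linear) order on each component and elements of different components are <-incomparable. -/

import Mathlib

/-- Propositional formulas over atoms `α`. -/
inductive PForm (α : Type) : Type
  | atom : α → PForm α
  | neg : PForm α → PForm α
  | conj : PForm α → PForm α → PForm α
  | disj : PForm α → PForm α → PForm α

/-- Truth of a propositional formula at a world, given a valuation. -/
def PForm.sat {α W : Type} (V : W → α → Prop) : W → PForm α → Prop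
  | w, .atom a => V w a
  | w, .neg A => ¬ PForm.sat V w A
  | w, .conj A B => PForm.sat V w A ∧ PForm.sat V w B
  | w, .disj A B => PForm.sat V w A ∨ PForm.sat V w B

/-- `minW lt S w` : `w` is a `lt`-minimal world satisfying `S`. -/
def minW {W : Type} (lt : W → W → Prop) (S : W → Prop) (w : W) : Prop :=
  S w ∧ ∀ w', lt w' w → ¬ S w'

/-- The language of P extended with boxed formulas `□¬A`. -/
inductive CForm (α : Type) : Type
  | prop : PForm α → CForm α
  | cond : PForm α → PForm α → CForm α
  | boxneg : PForm α → CForm α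
  | neg : CForm α → CForm α
  | conj : CForm α → CForm α → CForm α
  | disj : CForm α → CForm α → CForm α

/-- A preferential model: `<` irreflexive, transitive, smooth. -/
structure PrefModel (α : Type) where
  W : Type
  lt : W → W → Prop
  V : W → α → Prop
  nonempty : Nonempty W
  irrefl : Irreflexive lt
  trans : Transitive lt
  smooth : ∀ (A : PForm α) (w : W), PForm.sat V w A →
      minW lt (fun v => PForm.sat V v A) w ∨
        ∃ w', minW lt (fun v => PForm.sat V v A) w' ∧ lt w' w

/-- Truth of a formula of the extended language at a world. -/
def csat {α : Type} (M : PrefModel α) : M.W → CForm α → Prop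
  | w, .prop A => PForm.sat M.V w A
  | _, .cond A B => ∀ v, minW M.lt (fun u => PForm.sat M.V u A) v → PForm.sat M.V v B
  | w, .boxneg A => ∀ w', M.lt w' w → ¬ PForm.sat M.V w' A
  | w, .neg F => ¬ csat M w F
  | w, .conj F G => csat M w F ∧ csat M w G
  | w, .disj F G => csat M w F ∨ csat M w G

/-- A multi-linear model: finite, and the worlds partition into components
(the fibers of `c`) on each of which `<` is a strict total order, while worlds
in distinct components are incomparable. -/
def MultiLinear {α : Type} (M : PrefModel α) : Prop :=
  Finite M.W ∧ ∃ (I : Type) (c : M.W → I),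
    (∀ w w', c w = c w' → w ≠ w' → M.lt w w' ∨ M.lt w' w) ∧
    (∀ w w', c w ≠ c w' → ¬ M.lt w w' ∧ ¬ M.lt w' w)

/-! ### Helpers -/

/-- The conditional pairs occurring in a formula. -/
def condsOf {α : Type} : CForm α → List (PForm α × PForm α)
  | .prop _ => []
  | .cond A B => [(A, B)]
  | .boxneg _ => []
  | .neg F => condsOf F
  | .conj F G => condsOf F ++ condsOf G
  | .disj F G => condsOf F ++ condsOf G

/-- The boxed formulas occurring in a formula. -/
def boxesOf {α : Type} : CForm α → List (PForm α)
  | .prop _ => []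
  | .cond _ _ => []
  | .boxneg A => [A]
  | .neg F => boxesOf F
  | .conj F G => boxesOf F ++ boxesOf G
  | .disj F G => boxesOf F ++ boxesOf G

section Construction
open scoped Classical

variable {α : Type} (M : PrefModel α)

/-- Auxiliary: `y ≤ v` in the model order. -/
def Mle (y v : M.W) : Prop := y = v ∨ M.lt y v

lemma Mle_trans {y u v : M.W} (h1 : Mle M y u) (h2 : Mle M u v) : Mle M y v := by
  rcases h1 with rfl | h1
  · exact h2
  · rcases h2 with rfl | h2
    · exact Or.inr h1
    · exact Or.inr (M.trans h1 h2)

lemma exists_min_le (A : PForm α) {v y : M.W} (hy : Mle M y v)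
    (hs : PForm.sat M.V y A) :
    ∃ m, minW M.lt (fun u => PForm.sat M.V u A) m ∧ Mle M m v := by
  rcases M.smooth A y hs with hmin | ⟨m, hm, hlt⟩
  · exact ⟨y, hmin, hy⟩
  · exact ⟨m, hm, Mle_trans M (Or.inr hlt) hy⟩

/-- Chosen minimal witness for `A` below `v` (junk value `v` if none exists). -/
noncomputable def mwit (A : PForm α) (v : M.W) : M.W :=
  if h : ∃ m, minW M.lt (fun u => PForm.sat M.V u A) m ∧ Mle M m v then h.choose else v

lemma mwit_spec {A : PForm α} {v : M.W}
    (h : ∃ y, Mle M y v ∧ PForm.sat M.V y A) :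
    minW M.lt (fun u => PForm.sat M.V u A) (mwit M A v) ∧ Mle M (mwit M A v) v := by
  obtain ⟨y, hy, hs⟩ := h
  have h' := exists_min_le M A hy hs
  simp only [mwit]
  rw [dif_pos h']
  exact h'.choose_spec

/-- The downward closure chain: worlds added below a root `v`. -/
inductive Chain : List (PForm α) → M.W → M.W → Prop
  | root (L : List (PForm α)) (v : M.W) : Chain L v v
  | step {L : List (PForm α)} {v u : M.W} (A : PForm α) (hA : A ∈ L)
      (h : ∃ y, Mle M y v ∧ PForm.sat M.V y A)
      (hc : Chain (L.erase A) (mwit M A v) u) : Chain L v u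

lemma chain_le {L : List (PForm α)} {v u : M.W} (h : Chain M L v u) : Mle M u v := by
  induction h with
  | root => exact Or.inl rfl
  | step A hA hex hc ih => exact Mle_trans M ih (mwit_spec M hex).2

lemma chain_closure {L : List (PForm α)} {v u : M.W} (h : Chain M L v u) :
    ∀ A ∈ L, (∃ y, Mle M y u ∧ PForm.sat M.V y A) →
      ∃ m, Chain M L v m ∧ minW M.lt (fun x => PForm.sat M.V x A) m ∧ Mle M m u := by
  induction h with
  | root L v =>
    intro A hA hex
    refine ⟨mwit M A v, ?_, (mwit_spec M hex).1, (mwit_spec M hex).2⟩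
    exact Chain.step A hA hex (Chain.root _ _)
  | @step L v u A' hA' hex hc ih =>
    intro A hA hexu
    by_cases hmem : A ∈ L.erase A'
    · obtain ⟨m, hcm, hmin, hle⟩ := ih A hmem hexu
      exact ⟨m, Chain.step A' hA' hex hcm, hmin, hle⟩
    · have hAA : A = A' := by
        by_contra hne
        exact hmem ((List.mem_erase_of_ne hne).2 hA)
      subst hAA
      obtain ⟨y, hyu, hys⟩ := hexu
      have hms := mwit_spec M hex
      have hyw : Mle M y (mwit M A v) := Mle_trans M hyu (chain_le M hc)
      have hy_eq : y = mwit M A v := by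
        rcases hyw with h' | h'
        · exact h'
        · exact absurd hys (hms.1.2 y h')
      have hu_eq : u = mwit M A v := by
        rcases chain_le M hc with h' | h'
        · exact h'
        · -- y ≤ u < mwit, but y = mwit: contradiction with irreflexivity
          exfalso
          rcases hyu with rfl | h''
          · exact M.irrefl _ (hy_eq ▸ h')
          · exact M.irrefl _ (hy_eq ▸ (M.trans h'' h'))
      refine ⟨u, Chain.step A hA' hex hc, ?_, Or.inl rfl⟩
      rw [hu_eq]; exact hms.1

lemma chain_finite : ∀ (n : ℕ) (L : List (PForm α)), L.length ≤ n → ∀ v : M.W,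
    {u | Chain M L v u}.Finite := by
  intro n
  induction n with
  | zero =>
    intro L hL v
    apply Set.Finite.subset (Set.finite_singleton v)
    intro u hu
    rcases hu with _ | ⟨A, hA, _, _⟩
    · exact rfl
    · rw [List.length_eq_zero_iff.mp (Nat.le_zero.mp hL)] at hA
      exact absurd hA (List.not_mem_nil (a := A))
  | succ n ih =>
    intro L hL v
    apply Set.Finite.subset (Set.Finite.insert v
      (Set.Finite.biUnion L.finite_toSet
        (fun A (hA : A ∈ L) => ih (L.erase A) (by
          have := List.length_erase_add_one hA; omega) (mwit M A v))))
    intro u hu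
    rcases hu with _ | ⟨A, hA, hex, hc⟩
    · exact Set.mem_insert _ _
    · exact Set.mem_insert_of_mem _ (Set.mem_biUnion hA hc)

end Construction


/-- A transitive well-founded relation is smooth. -/
lemma smooth_of_wf {W : Type} {lt : W → W → Prop} (htr : Transitive lt)
    (hwf : WellFounded lt) (S : W → Prop) (w : W) (hS : S w) :
    minW lt S w ∨ ∃ w', minW lt S w' ∧ lt w' w := by
  obtain ⟨m, hm, hmin⟩ := hwf.has_min {v | S v ∧ (v = w ∨ lt v w)} ⟨w, hS, Or.inl rfl⟩
  have hminW : minW lt S m := by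
    refine ⟨hm.1, fun z hz hSz => hmin z ⟨hSz, Or.inr ?_⟩ hz⟩
    rcases hm.2 with rfl | h
    · exact hz
    · exact htr hz h
  rcases hm.2 with rfl | h
  · exact Or.inl hminW
  · exact Or.inr ⟨m, hminW, h⟩

lemma psat_proj {α W W' : Type} (pr : W' → W) (V : W → α → Prop) (x : W') (A : PForm α) :
    PForm.sat (fun y a => V (pr y) a) x A ↔ PForm.sat V (pr x) A := by
  induction A with
  | atom a => exact Iff.rfl
  | neg A ih => simp [PForm.sat, ih]
  | conj A B ihA ihB => simp [PForm.sat, ihA, ihB]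
  | disj A B ihA ihB => simp [PForm.sat, ihA, ihB]

/-- any finite satisfiable set of formulas of P is satisfiable in
a multi-linear preferential model. -/
theorem multilinear_model_theorem {α : Type} (Γ : List (CForm α))
    (hsat : ∃ (M : PrefModel α) (w : M.W), ∀ F ∈ Γ, csat M w F) :
    ∃ M : PrefModel α, MultiLinear M ∧ ∃ w : M.W, ∀ F ∈ Γ, csat M w F := by
  classical
  obtain ⟨M, w₀, hw⟩ := hsat
  -- a linear extension `s` of the partial order `Mle M`
  have hpo : IsPartialOrder M.W (Mle M) :=
    { refl := fun a => Or.inl rfl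
      trans := fun a b c h1 h2 => Mle_trans M h1 h2
      antisymm := by
        rintro a b (rfl | h1) h2
        · rfl
        · rcases h2 with rfl | h2
          · rfl
          · exact absurd (M.trans h1 h2) (fun hh => M.irrefl a hh) }
  obtain ⟨s, hlin, hrs⟩ := @extend_partialOrder M.W (Mle M) hpo
  have s_of_Mle : ∀ {a b : M.W}, Mle M a b → s a b := fun h => hrs _ _ h
  have s_trans : ∀ {a b c : M.W}, s a b → s b c → s a c :=
    fun h1 h2 => hlin.trans _ _ _ h1 h2
  have s_antisymm : ∀ {a b : M.W}, s a b → s b a → a = b :=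
    fun h1 h2 => hlin.antisymm _ _ h1 h2
  have s_total : ∀ a b : M.W, s a b ∨ s b a := hlin.total
  -- ingredients of the multi-linear model
  set pairs : List (PForm α × PForm α) := Γ.flatMap condsOf with hpairs
  set lam : List (PForm α) := pairs.map Prod.fst ++ Γ.flatMap boxesOf with hlam
  set pick : PForm α × PForm α → Option M.W := fun p =>
    if h : ∃ v, minW M.lt (fun u => PForm.sat M.V u p.1) v ∧ ¬ PForm.sat M.V v p.2
    then some h.choose else none with hpick
  set roots : List M.W := w₀ :: pairs.filterMap pick with hroots
  set T : Type := {p : Fin roots.length × M.W // Chain M lam (roots.get p.1) p.2} with hT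
  set lt' : T → T → Prop := fun x y =>
    x.val.1 = y.val.1 ∧ s x.val.2 y.val.2 ∧ x.val.2 ≠ y.val.2 with hlt'
  set V' : T → α → Prop := fun x a => M.V x.val.2 a with hV'
  -- basic facts
  have hTne : Nonempty T :=
    ⟨⟨(⟨0, Nat.succ_pos _⟩, w₀), Chain.root _ _⟩⟩
  have hirr : Irreflexive lt' := fun x hx => hx.2.2 rfl
  have htr : Transitive lt' := by
    rintro x y z ⟨h1, h2, h3⟩ ⟨h4, h5, h6⟩
    refine ⟨h1.trans h4, s_trans h2 h5, fun he => ?_⟩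
    exact h3 (s_antisymm h2 (he ▸ h5))
  have hTfin : Finite T := by
    have huniv : (Set.univ : Set (Fin roots.length)).Finite := Set.finite_univ
    have hfib : ∀ i : Fin roots.length,
        (({i} : Set (Fin roots.length)) ×ˢ {u | Chain M lam (roots.get i) u}).Finite :=
      fun i => Set.Finite.prod (Set.finite_singleton i)
        (chain_finite M lam.length lam le_rfl (roots.get i))
    have hfin : {p : Fin roots.length × M.W | Chain M lam (roots.get p.1) p.2}.Finite := by
      apply Set.Finite.subset (Set.Finite.biUnion huniv (fun i _ => hfib i))
      intro p hp
      exact Set.mem_biUnion (Set.mem_univ p.1) ⟨rfl, hp⟩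
    exact hfin.to_subtype
  have hwf : WellFounded lt' := by
    haveI := hTfin
    haveI : IsTrans T lt' := ⟨fun a b c h1 h2 => htr h1 h2⟩
    haveI : IsIrrefl T lt' := ⟨hirr⟩
    exact Finite.wellFounded_of_trans_of_irrefl lt'
  -- the model
  let N : PrefModel α :=
    { W := T, lt := lt', V := V', nonempty := hTne, irrefl := hirr, trans := htr,
      smooth := fun A w hswA => smooth_of_wf htr hwf _ w hswA }
  have hpsat : ∀ (x : T) (A : PForm α), PForm.sat V' x A ↔ PForm.sat M.V x.val.2 A :=
    fun x A => psat_proj (fun y : T => y.val.2) M.V x A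
  -- chains of a component lie below its root
  have hbelow : ∀ (x : T), Mle M x.val.2 (roots.get x.val.1) :=
    fun x => chain_le M x.property
  -- transfer of minimality from N to M, for A ∈ lam
  have minToM : ∀ (A : PForm α), A ∈ lam → ∀ x : T,
      minW lt' (fun v => PForm.sat V' v A) x →
      minW M.lt (fun u => PForm.sat M.V u A) x.val.2 := by
    intro A hA x hx
    refine ⟨(hpsat x A).mp hx.1, ?_⟩
    intro y hy hsy
    obtain ⟨m, hcm, hmin, hle⟩ := chain_closure M x.property A hA ⟨y, Or.inr hy, hsy⟩
    rcases hle with heq | hlt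
    · exact (heq ▸ hmin).2 y hy hsy
    · have hy' : lt' ⟨(x.val.1, m), hcm⟩ x :=
        ⟨rfl, s_of_Mle (Or.inr hlt), fun he => M.irrefl _ (he ▸ hlt)⟩
      exact hx.2 ⟨(x.val.1, m), hcm⟩ hy' ((hpsat _ A).mpr hmin.1)
  -- conditional transfer
  have condT : ∀ A B : PForm α, (A, B) ∈ pairs →
      ((∀ v, minW lt' (fun u => PForm.sat V' u A) v → PForm.sat V' v B) ↔
       (∀ v, minW M.lt (fun u => PForm.sat M.V u A) v → PForm.sat M.V v B)) := by
    intro A B hAB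
    have hAlam : A ∈ lam := by
      rw [hlam]
      exact List.mem_append_left _ (List.mem_map.2 ⟨(A, B), hAB, rfl⟩)
    constructor
    · -- if it fails in M, it fails in N
      intro hN
      by_contra hM
      push_neg at hM
      obtain ⟨v, hvmin, hvB⟩ := hM
      have hex : ∃ v, minW M.lt (fun u => PForm.sat M.V u A) v ∧ ¬ PForm.sat M.V v B :=
        ⟨v, hvmin, hvB⟩
      have hpk : pick (A, B) = some hex.choose := by rw [hpick]; exact dif_pos hex
      obtain ⟨c, hcA, hcmin, hcnB, hcroots⟩ : ∃ c, PForm.sat M.V c A ∧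
          (∀ w', M.lt w' c → ¬ PForm.sat M.V w' A) ∧
          ¬ PForm.sat M.V c B ∧ c ∈ roots := by
        refine ⟨hex.choose, hex.choose_spec.1.1, hex.choose_spec.1.2, hex.choose_spec.2, ?_⟩
        rw [hroots]
        exact List.mem_cons_of_mem _ (List.mem_filterMap.2 ⟨(A, B), hAB, hpk⟩)
      obtain ⟨i, hi⟩ := List.mem_iff_get.mp hcroots
      have hch : Chain M lam (roots.get i) c := hi ▸ Chain.root lam c
      have hxmin : minW lt' (fun u => PForm.sat V' u A) ⟨(i, c), hch⟩ := by
        refine ⟨(hpsat ⟨(i, c), hch⟩ A).mpr hcA, ?_⟩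
        intro y hy hsy
        have h2 : Mle M y.val.2 c := by
          have := hbelow y
          rw [show y.val.1 = i from hy.1] at this
          rwa [hi] at this
        rcases h2 with heq | hlt2
        · exact hy.2.2 heq
        · exact hcmin y.val.2 hlt2 ((hpsat y A).mp hsy)
      exact hcnB ((hpsat ⟨(i, c), hch⟩ B).mp (hN ⟨(i, c), hch⟩ hxmin))
    · intro hM v hvmin
      exact (hpsat v B).mpr (hM v.val.2 (minToM A hAlam v hvmin))
  -- the world for Γ
  set w0' : T := ⟨(⟨0, Nat.succ_pos _⟩, w₀), Chain.root lam w₀⟩ with hw0'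
  have hroot0 : roots.get (⟨0, Nat.succ_pos _⟩ : Fin roots.length) = w₀ := rfl
  -- boxneg transfer
  have boxT : ∀ A : PForm α, A ∈ lam →
      ((∀ y : T, lt' y w0' → ¬ PForm.sat V' y A) ↔
       (∀ y : M.W, M.lt y w₀ → ¬ PForm.sat M.V y A)) := by
    intro A hA
    constructor
    · intro hN
      by_contra hM
      push_neg at hM
      obtain ⟨y, hy, hsy⟩ := hM
      obtain ⟨m, hcm, hmin, hle⟩ :=
        chain_closure M (Chain.root lam w₀) A hA ⟨y, Or.inr hy, hsy⟩
      have hmlt : M.lt m w₀ := by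
        rcases hle with rfl | h
        · exact absurd hsy (hmin.2 y hy)
        · exact h
      have : lt' ⟨(⟨0, Nat.succ_pos _⟩, m), hcm⟩ w0' :=
        ⟨rfl, s_of_Mle (Or.inr hmlt), fun he => M.irrefl w₀ ((show m = w₀ from he) ▸ hmlt)⟩
      exact hN _ this ((hpsat _ A).mpr hmin.1)
    · intro hM y hy hsy
      have h2 : Mle M y.val.2 w₀ := by
        have := hbelow y
        rwa [hy.1] at this
      rcases h2 with heq | hlt2
      · exact hy.2.2 heq
      · exact hM y.val.2 hlt2 ((hpsat y A).mp hsy)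
  -- full transfer
  have transfer : ∀ F : CForm α,
      (∀ p ∈ condsOf F, p ∈ pairs) → (∀ A ∈ boxesOf F, A ∈ lam) →
      (csat N w0' F ↔ csat M w₀ F) := by
    intro F
    induction F with
    | prop A =>
      intro _ _
      exact hpsat w0' A
    | cond A B =>
      intro hc _
      exact condT A B (hc (A, B) (List.mem_singleton_self _))
    | boxneg A =>
      intro _ hb
      exact boxT A (hb A (List.mem_singleton_self _))
    | neg F ih =>
      intro hc hb
      simp only [csat]
      rw [ih (fun p hp => hc p hp) (fun A hA => hb A hA)]
    | conj F G ihF ihG =>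
      intro hc hb
      simp only [csat]
      rw [ihF (fun p hp => hc p (by simp [condsOf, hp])) (fun A hA => hb A (by simp [boxesOf, hA])),
        ihG (fun p hp => hc p (by simp [condsOf, hp])) (fun A hA => hb A (by simp [boxesOf, hA]))]
    | disj F G ihF ihG =>
      intro hc hb
      simp only [csat]
      rw [ihF (fun p hp => hc p (by simp [condsOf, hp])) (fun A hA => hb A (by simp [boxesOf, hA])),
        ihG (fun p hp => hc p (by simp [condsOf, hp])) (fun A hA => hb A (by simp [boxesOf, hA]))]
  refine ⟨N, ⟨hTfin, Fin roots.length, fun x => x.val.1, ?_, ?_⟩, w0', ?_⟩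
  · -- totality within a component
    intro x y hxy hne
    have hne2 : x.val.2 ≠ y.val.2 := by
      intro he
      exact hne (Subtype.ext (Prod.ext hxy he))
    rcases s_total x.val.2 y.val.2 with h | h
    · exact Or.inl ⟨hxy, h, hne2⟩
    · exact Or.inr ⟨hxy.symm, h, fun he => hne2 he.symm⟩
  · -- incomparability across components
    intro x y hxy
    exact ⟨fun h => hxy h.1, fun h => hxy h.1.symm⟩
  · intro F hF
    refine (transfer F ?_ ?_).mpr (hw F hF)
    · intro p hp
      rw [hpairs]
      exact List.mem_flatMap.2 ⟨F, hF, hp⟩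
    · intro A hA
      rw [hlam]
      exact List.mem_append_right _ (List.mem_flatMap.2 ⟨F, hF, hA⟩)
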